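/- Suppose the identifiability condition holds: Θ* ∈ ([−M,M]^p)^k satisfies ∫ f_{Θ*} dP ≤ ∫ f_Θ dP for all Θ ∈ (ℝ^p)^k, and for every η > 0 there exists ε > 0 such that every Θ ∈ ([−M,M]^p)^k with diss(Θ, Θ*) > η satisfies ∫ f_Θ dP > ∫ f_{Θ*} dP + ε. Let Θ̂_n : Ω → ([−M,M]^p)^k be measurable maps such that, almost surely, Θ̂_n minimizes Θ ↦ (1/n) Σ_{i=1}^n f_Θ(X_i) over ([−M,M]^p)^k. Then ∫ f_{Θ̂_n} dP → ∫ f_{Θ*} dP almost surely and diss(Θ̂_n, Θ*) → 0 almost surely. -/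

import Mathlib

open MeasureTheory ProbabilityTheory Real Filter
open scoped ENNReal

/-- Bregman divergence generated by a differentiable function `φ`. -/
noncomputable def dphi {p : ℕ} (φ : EuclideanSpace ℝ (Fin p) → ℝ)
    (x y : EuclideanSpace ℝ (Fin p)) : ℝ :=
  φ x - φ y - inner ℝ (gradient φ y) (x - y)

/-- The cube `[-M, M]^p` in `ℝ^p`. -/
def cube (p : ℕ) (M : ℝ) : Set (EuclideanSpace ℝ (Fin p)) := {x | ∀ i, |x i| ≤ M}

/-- The clustering objective `f_Θ(x) = Ψ(d_φ(x,θ₁),…,d_φ(x,θ_k))`. -/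
noncomputable def fTheta {p k : ℕ} (φ : EuclideanSpace ℝ (Fin p) → ℝ)
    (Ψ : (Fin k → ℝ) → ℝ) (Θ : Fin k → EuclideanSpace ℝ (Fin p))
    (x : EuclideanSpace ℝ (Fin p)) : ℝ :=
  Ψ (fun j => dphi φ x (Θ j))

/-- Permutation-invariant dissimilarity between configurations of `k` centroids. -/
noncomputable def diss {p k : ℕ} (Θ Θ' : Fin k → EuclideanSpace ℝ (Fin p)) : ℝ :=
  ⨅ σ : Equiv.Perm (Fin k), Real.sqrt (∑ j, ‖Θ j - Θ' (σ j)‖ ^ 2)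

open Topology

lemma diss_nonneg {p k : ℕ} (Θ Θ' : Fin k → EuclideanSpace ℝ (Fin p)) :
    0 ≤ diss Θ Θ' :=
  Real.iInf_nonneg fun _ => Real.sqrt_nonneg _

lemma inv_mul_abs_sum_le {n : ℕ} {f : ℕ → ℝ} {c : ℝ} (hc : 0 ≤ c)
    (h : ∀ i ∈ Finset.range n, |f i| ≤ c) :
    |(n:ℝ)⁻¹ * ∑ i ∈ Finset.range n, f i| ≤ c := by
  rcases Nat.eq_zero_or_pos n with hn | hn
  · simp [hn, hc]
  · have hnpos : (0:ℝ) < n := by exact_mod_cast hn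
    rw [abs_mul, abs_inv, Nat.abs_cast]
    have h2 : |∑ i ∈ Finset.range n, f i| ≤ (n:ℝ) * c := by
      calc |∑ i ∈ Finset.range n, f i| ≤ ∑ i ∈ Finset.range n, |f i| :=
            Finset.abs_sum_le_sum_abs _ _
        _ ≤ ∑ _i ∈ Finset.range n, c := Finset.sum_le_sum h
        _ = (n:ℝ) * c := by simp [mul_comm]
    calc (n:ℝ)⁻¹ * |∑ i ∈ Finset.range n, f i| ≤ (n:ℝ)⁻¹ * ((n:ℝ) * c) :=
          mul_le_mul_of_nonneg_left h2 (by positivity)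
      _ = c := by field_simp


section aux
variable {p : ℕ} {M H : ℝ} (φ : EuclideanSpace ℝ (Fin p) → ℝ)

lemma zero_mem_cube (hM : 0 ≤ M) : (0 : EuclideanSpace ℝ (Fin p)) ∈ cube p M := by
  intro i; simp [hM]

lemma cube_norm_le (hM : 0 ≤ M) {x : EuclideanSpace ℝ (Fin p)} (hx : x ∈ cube p M) :
    ‖x‖ ≤ M * Real.sqrt p := by
  rw [EuclideanSpace.norm_eq]
  have h1 : ∑ i, ‖x i‖ ^ 2 ≤ (p : ℝ) * M ^ 2 := by
    calc ∑ i, ‖x i‖ ^ 2 ≤ ∑ _i : Fin p, M ^ 2 := by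
          apply Finset.sum_le_sum
          intro i _
          have := hx i
          have h0 : ‖x i‖ = |x i| := rfl
          nlinarith [abs_nonneg (x i)]
      _ = (p : ℝ) * M ^ 2 := by simp [mul_comm]
  calc Real.sqrt (∑ i, ‖x i‖ ^ 2) ≤ Real.sqrt ((p:ℝ) * M ^ 2) := Real.sqrt_le_sqrt h1
    _ = M * Real.sqrt p := by
        rw [Real.sqrt_mul (Nat.cast_nonneg p), Real.sqrt_sq hM]; ring

lemma cube_norm_sub_le (hM : 0 ≤ M) {x y : EuclideanSpace ℝ (Fin p)}
    (hx : x ∈ cube p M) (hy : y ∈ cube p M) : ‖x - y‖ ≤ 2 * M * Real.sqrt p := by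
  calc ‖x - y‖ ≤ ‖x‖ + ‖y‖ := norm_sub_le x y
    _ ≤ M * Real.sqrt p + M * Real.sqrt p := add_le_add (cube_norm_le hM hx) (cube_norm_le hM hy)
    _ = 2 * M * Real.sqrt p := by ring

lemma cube_isClosed : IsClosed (cube p M) := by
  have : cube p M = ⋂ i, {x : EuclideanSpace ℝ (Fin p) | |x i| ≤ M} := by
    ext x; simp [cube, Set.mem_iInter]
  rw [this]
  refine isClosed_iInter fun i => ?_
  have hc : Continuous fun x : EuclideanSpace ℝ (Fin p) => x i :=
    (EuclideanSpace.proj (𝕜 := ℝ) i).continuous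
  exact isClosed_le hc.abs continuous_const

lemma cube_isCompact (hM : 0 ≤ M) : IsCompact (cube p M) := by
  apply Metric.isCompact_of_isClosed_isBounded cube_isClosed
  apply (Metric.isBounded_closedBall (x := (0 : EuclideanSpace ℝ (Fin p)))
    (r := M * Real.sqrt p)).subset
  intro x hx
  rw [Metric.mem_closedBall, dist_zero_right]
  exact cube_norm_le hM hx

lemma grad_inner (y v : EuclideanSpace ℝ (Fin p)) :
    (inner ℝ (gradient φ y) v : ℝ) = fderiv ℝ φ y v := by
  rw [gradient, ← InnerProductSpace.toDual_apply_apply]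
  simp

lemma convex_grad_le (hconv : ConvexOn ℝ Set.univ φ) (hφ : Differentiable ℝ φ)
    (x y : EuclideanSpace ℝ (Fin p)) :
    φ y + inner ℝ (gradient φ y) (x - y) ≤ φ x := by
  set g : ℝ → ℝ := fun t => φ (y + t • (x - y)) with hg
  have hc : ∀ t : ℝ, HasDerivAt g (fderiv ℝ φ (y + t • (x - y)) (x - y)) t := by
    intro t
    have hline : HasDerivAt (fun t : ℝ => y + t • (x - y)) (x - y) t := by
      simpa using ((hasDerivAt_id t).smul_const (x - y)).const_add y
    exact ((hφ _).hasFDerivAt.comp_hasDerivAt t hline)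
  have hslope : ∀ t ∈ Set.Ioo (0:ℝ) 1, slope g 0 t ≤ φ x - φ y := by
    intro t ht
    have h1 : g t ≤ (1 - t) * φ y + t * φ x := by
      have h2 : φ ((1-t) • y + t • x) ≤ (1-t) • φ y + t • φ x :=
        hconv.2 (Set.mem_univ y) (Set.mem_univ x) (by linarith [ht.2]) (le_of_lt ht.1) (by ring)
      rw [smul_eq_mul, smul_eq_mul] at h2
      have harg : y + t • (x - y) = (1-t) • y + t • x := by module
      calc g t = φ ((1-t) • y + t • x) := by rw [hg]; simp only; rw [harg]
        _ ≤ (1-t) * φ y + t * φ x := h2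
    have h0 : g 0 = φ y := by simp [hg]
    rw [slope_def_field, h0, sub_zero, div_le_iff₀ ht.1]
    nlinarith [ht.1]
  have hderiv0 : HasDerivAt g (inner ℝ (gradient φ y) (x - y) : ℝ) 0 := by
    have := hc 0
    simpa [grad_inner φ] using this
  have htend : Tendsto (slope g 0) (𝓝[>] (0:ℝ)) (𝓝 (inner ℝ (gradient φ y) (x - y) : ℝ)) :=
    (hasDerivAt_iff_tendsto_slope.1 hderiv0).mono_left
      (nhdsWithin_mono _ (fun t ht => ne_of_gt ht))
  have : (inner ℝ (gradient φ y) (x - y) : ℝ) ≤ φ x - φ y := by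
    refine le_of_tendsto htend ?_
    filter_upwards [Ioo_mem_nhdsGT_of_mem (Set.left_mem_Ico.2 one_pos)] with t ht
    exact hslope t ht
  linarith

lemma dphi_nonneg (hconv : ConvexOn ℝ Set.univ φ) (hφ : Differentiable ℝ φ)
    (x y : EuclideanSpace ℝ (Fin p)) : 0 ≤ dphi φ x y := by
  have := convex_grad_le φ hconv hφ x y
  simp only [dphi]; linarith

lemma dphi_add (x y : EuclideanSpace ℝ (Fin p)) :
    dphi φ x y + dphi φ y x = inner ℝ (gradient φ x - gradient φ y) (x - y) := by
  have h : (inner ℝ (gradient φ x) (y - x) : ℝ) = - inner ℝ (gradient φ x) (x - y) := by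
    rw [← inner_neg_right]; congr 1; abel
  simp only [dphi, inner_sub_left]
  rw [h]; ring

lemma dphi_sub_right (x θ θ' : EuclideanSpace ℝ (Fin p)) :
    dphi φ x θ - dphi φ x θ' =
      inner ℝ (gradient φ θ' - gradient φ θ) (x - θ) - dphi φ θ θ' := by
  have h : (inner ℝ (gradient φ θ') (x - θ') : ℝ) =
      inner ℝ (gradient φ θ') (x - θ) + inner ℝ (gradient φ θ') (θ - θ') := by
    rw [← inner_add_right]; congr 1; abel
  simp only [dphi, inner_sub_left]
  rw [h]; ring

variable (hconv : ConvexOn ℝ Set.univ φ) (hφ : Differentiable ℝ φ)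
  (hM : 0 ≤ M) (hH : 0 ≤ H)
  (hgradlip : ∀ x ∈ cube p M, ∀ y ∈ cube p M,
      ‖gradient φ x - gradient φ y‖ ≤ H * ‖x - y‖)

include hconv hφ hM hH hgradlip in
lemma dphi_le_mul {x y : EuclideanSpace ℝ (Fin p)} (hx : x ∈ cube p M) (hy : y ∈ cube p M) :
    dphi φ x y ≤ (H * ‖x - y‖) * (2 * M * Real.sqrt p) := by
  have h2 := dphi_nonneg φ hconv hφ y x
  have h3 := dphi_add φ x y
  have h4 : (inner ℝ (gradient φ x - gradient φ y) (x - y) : ℝ) ≤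
      ‖gradient φ x - gradient φ y‖ * ‖x - y‖ := real_inner_le_norm _ _
  have h5 := hgradlip x hx y hy
  have h6 := cube_norm_sub_le hM hx hy
  have h7 : (0:ℝ) ≤ ‖x - y‖ := norm_nonneg _
  have h8 : ‖gradient φ x - gradient φ y‖ * ‖x - y‖ ≤ (H * ‖x - y‖) * ‖x - y‖ :=
    mul_le_mul_of_nonneg_right h5 h7
  have h9 : (H * ‖x - y‖) * ‖x - y‖ ≤ (H * ‖x - y‖) * (2 * M * Real.sqrt p) :=
    mul_le_mul_of_nonneg_left h6 (by positivity)
  linarith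

include hconv hφ hM hH hgradlip in
lemma dphi_le_bound {x y : EuclideanSpace ℝ (Fin p)} (hx : x ∈ cube p M) (hy : y ∈ cube p M) :
    dphi φ x y ≤ H * (2 * M * Real.sqrt p) ^ 2 := by
  have h1 := dphi_le_mul φ hconv hφ hM hH hgradlip hx hy
  have h6 := cube_norm_sub_le hM hx hy
  have h7 : (0:ℝ) ≤ ‖x - y‖ := norm_nonneg _
  have h8 : (0:ℝ) ≤ 2 * M * Real.sqrt p := by positivity
  have h9 : (H * ‖x - y‖) * (2 * M * Real.sqrt p) ≤ (H * (2 * M * Real.sqrt p)) * (2 * M * Real.sqrt p) :=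
    mul_le_mul_of_nonneg_right (mul_le_mul_of_nonneg_left h6 hH) h8
  calc dphi φ x y ≤ (H * ‖x - y‖) * (2 * M * Real.sqrt p) := h1
    _ ≤ (H * (2 * M * Real.sqrt p)) * (2 * M * Real.sqrt p) := h9
    _ = H * (2 * M * Real.sqrt p) ^ 2 := by ring

include hconv hφ hM hH hgradlip in
lemma dphi_lip_right {x θ θ' : EuclideanSpace ℝ (Fin p)} (hx : x ∈ cube p M)
    (hθ : θ ∈ cube p M) (hθ' : θ' ∈ cube p M) :
    |dphi φ x θ - dphi φ x θ'| ≤ (4 * H * M * Real.sqrt p) * ‖θ - θ'‖ := by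
  rw [dphi_sub_right]
  have h1 : |(inner ℝ (gradient φ θ' - gradient φ θ) (x - θ) : ℝ)| ≤
      ‖gradient φ θ' - gradient φ θ‖ * ‖x - θ‖ := abs_real_inner_le_norm _ _
  have h2 := hgradlip θ' hθ' θ hθ
  have h3 : ‖θ' - θ‖ = ‖θ - θ'‖ := norm_sub_rev _ _
  have h4 := cube_norm_sub_le hM hx hθ
  have h5 : dphi φ θ θ' ≤ (H * ‖θ - θ'‖) * (2 * M * Real.sqrt p) :=
    dphi_le_mul φ hconv hφ hM hH hgradlip hθ hθ'
  have h6 := dphi_nonneg φ hconv hφ θ θ'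
  have h7 : (0:ℝ) ≤ ‖θ - θ'‖ := norm_nonneg _
  have h8 : (0:ℝ) ≤ ‖x - θ‖ := norm_nonneg _
  have h9 : (0:ℝ) ≤ ‖gradient φ θ' - gradient φ θ‖ := norm_nonneg _
  have := abs_sub (inner ℝ (gradient φ θ' - gradient φ θ) (x - θ) : ℝ) (dphi φ θ θ')
  rw [abs_of_nonneg h6] at this
  have h10 : H * ‖θ - θ'‖ * ‖x - θ‖ ≤ H * ‖θ - θ'‖ * (2 * M * Real.sqrt p) := by
    apply mul_le_mul_of_nonneg_left h4; positivity
  have h11 : ‖gradient φ θ' - gradient φ θ‖ * ‖x - θ‖ ≤ (H * ‖θ - θ'‖) * ‖x - θ‖ := by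
    apply mul_le_mul_of_nonneg_right _ h8
    rw [← h3]; exact h2
  have h12 : (4 * H * M * Real.sqrt p) * ‖θ - θ'‖ =
      H * ‖θ - θ'‖ * (2 * M * Real.sqrt p) + H * ‖θ - θ'‖ * (2 * M * Real.sqrt p) := by ring
  linarith

include hφ in
lemma dphi_cont (θ : EuclideanSpace ℝ (Fin p)) :
    Continuous fun x => dphi φ x θ := by
  apply Continuous.sub (hφ.continuous.sub continuous_const)
  exact continuous_const.inner (continuous_id.sub continuous_const)

end aux

section ftheta
variable {p k : ℕ} {τ : ℝ} (φ : EuclideanSpace ℝ (Fin p) → ℝ) (Ψ : (Fin k → ℝ) → ℝ)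
  (hconv : ConvexOn ℝ Set.univ φ) (hφ : Differentiable ℝ φ)
  (hΨlip : ∀ u v : Fin k → ℝ, (∀ j, 0 ≤ u j) → (∀ j, 0 ≤ v j) →
      |Ψ u - Ψ v| ≤ τ * ∑ j, |u j - v j|)

include hconv hφ hΨlip in
lemma fTheta_diff_le (Θ Θ' : Fin k → EuclideanSpace ℝ (Fin p))
    (x x' : EuclideanSpace ℝ (Fin p)) :
    |fTheta φ Ψ Θ x - fTheta φ Ψ Θ' x'| ≤ τ * ∑ j, |dphi φ x (Θ j) - dphi φ x' (Θ' j)| :=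
  hΨlip _ _ (fun j => dphi_nonneg φ hconv hφ _ _) (fun j => dphi_nonneg φ hconv hφ _ _)

include hconv hφ hΨlip in
lemma fTheta_cont (Θ : Fin k → EuclideanSpace ℝ (Fin p)) :
    Continuous (fTheta φ Ψ Θ) := by
  rw [continuous_iff_continuousAt]
  intro x₀
  have hb : ∀ x, ‖fTheta φ Ψ Θ x - fTheta φ Ψ Θ x₀‖ ≤
      τ * ∑ j, |dphi φ x (Θ j) - dphi φ x₀ (Θ j)| := fun x => by
    rw [Real.norm_eq_abs]
    exact fTheta_diff_le φ Ψ hconv hφ hΨlip Θ Θ x x₀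
  have hgc : Continuous fun x => τ * ∑ j, |dphi φ x (Θ j) - dphi φ x₀ (Θ j)| := by
    apply continuous_const.mul
    exact continuous_finset_sum _ fun j _ => ((dphi_cont φ hφ (Θ j)).sub continuous_const).abs
  have hg : Tendsto (fun x => τ * ∑ j, |dphi φ x (Θ j) - dphi φ x₀ (Θ j)|) (𝓝 x₀) (𝓝 0) := by
    have := hgc.tendsto x₀
    simpa using this
  have h0 : Tendsto (fun x => fTheta φ Ψ Θ x - fTheta φ Ψ Θ x₀) (𝓝 x₀) (𝓝 0) :=
    squeeze_zero_norm hb hg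
  have := h0.add_const (fTheta φ Ψ Θ x₀)
  simpa [ContinuousAt] using this

end ftheta

/-- Strong consistency: under the identifiability condition, the empirical risk
minimizers satisfy `P f_Θ̂ₙ → P f_Θ*` and `diss(Θ̂ₙ, Θ*) → 0` almost surely. -/
theorem strong_consistency
    {p k : ℕ} (hp : 0 < p) (hk : 0 < k) {M : ℝ} (hM : 0 < M)
    (φ : EuclideanSpace ℝ (Fin p) → ℝ)
    (hφconv : ConvexOn ℝ Set.univ φ) (hφdiff : Differentiable ℝ φ)
    (hφzero : φ 0 = 0) (hgradzero : gradient φ 0 = 0)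
    {H : ℝ} (hH : 0 ≤ H)
    (hgradlip : ∀ x ∈ cube p M, ∀ y ∈ cube p M,
      ‖gradient φ x - gradient φ y‖ ≤ H * ‖x - y‖)
    (Ψ : (Fin k → ℝ) → ℝ)
    (hΨnonneg : ∀ u : Fin k → ℝ, (∀ j, 0 ≤ u j) → 0 ≤ Ψ u)
    (hΨmono : ∀ u v : Fin k → ℝ, (∀ j, 0 ≤ u j) → (∀ j, u j ≤ v j) → Ψ u ≤ Ψ v)
    (hΨzero : Ψ 0 = 0)
    {τ : ℝ} (hτ : 0 < τ)
    (hΨlip : ∀ u v : Fin k → ℝ, (∀ j, 0 ≤ u j) → (∀ j, 0 ≤ v j) →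
      |Ψ u - Ψ v| ≤ τ * ∑ j, |u j - v j|)
    {Ω : Type} [MeasureSpace Ω] [IsProbabilityMeasure (ℙ : Measure Ω)]
    (P : Measure (EuclideanSpace ℝ (Fin p))) [IsProbabilityMeasure P]
    (hP : P (cube p M) = 1)
    (X : ℕ → Ω → EuclideanSpace ℝ (Fin p))
    (hXmeas : ∀ i, Measurable (X i))
    (hXlaw : ∀ i, Measure.map (X i) ℙ = P)
    (hXindep : iIndepFun X ℙ)
    (Θstar : Fin k → EuclideanSpace ℝ (Fin p))
    (hΘstarC : ∀ j, Θstar j ∈ cube p M)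
    (hΘstar : ∀ Θ : Fin k → EuclideanSpace ℝ (Fin p),
      ∫ x, fTheta φ Ψ Θstar x ∂P ≤ ∫ x, fTheta φ Ψ Θ x ∂P)
    (Θhat : ℕ → Ω → Fin k → EuclideanSpace ℝ (Fin p))
    (hΘhatmeas : ∀ n, Measurable (Θhat n))
    (hΘhat : ∀ᵐ ω ∂(ℙ : Measure Ω), ∀ n : ℕ, 0 < n →
      (∀ j, Θhat n ω j ∈ cube p M) ∧
      ∀ Θ : Fin k → EuclideanSpace ℝ (Fin p), (∀ j, Θ j ∈ cube p M) →
        (n : ℝ)⁻¹ * ∑ i ∈ Finset.range n, fTheta φ Ψ (Θhat n ω) (X i ω) ≤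
          (n : ℝ)⁻¹ * ∑ i ∈ Finset.range n, fTheta φ Ψ Θ (X i ω))
    (hident : ∀ η : ℝ, 0 < η → ∃ ε : ℝ, 0 < ε ∧
      ∀ Θ : Fin k → EuclideanSpace ℝ (Fin p), (∀ j, Θ j ∈ cube p M) →
        η < diss Θ Θstar →
        ∫ x, fTheta φ Ψ Θstar x ∂P + ε < ∫ x, fTheta φ Ψ Θ x ∂P) :
    ∀ᵐ ω ∂(ℙ : Measure Ω),
      Tendsto (fun n => ∫ x, fTheta φ Ψ (Θhat n ω) x ∂P) atTop
        (nhds (∫ x, fTheta φ Ψ Θstar x ∂P)) ∧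
      Tendsto (fun n => diss (Θhat n ω) Θstar) atTop (nhds 0) := by
  classical
  have hM0 : (0:ℝ) ≤ M := hM.le
  set C : ℝ := 4 * H * M * Real.sqrt p with hCdef
  have hC : (0:ℝ) ≤ C := by rw [hCdef]; positivity
  set Bd : ℝ := H * (2 * M * Real.sqrt p) ^ 2 with hBdef
  have hBd : (0:ℝ) ≤ Bd := by rw [hBdef]; positivity
  set Bf : ℝ := τ * (k * Bd) with hBfdef
  have hBf : (0:ℝ) ≤ Bf := by rw [hBfdef]; positivity
  set L : ℝ := τ * (k * C) with hLdef
  have hL : (0:ℝ) ≤ L := by rw [hLdef]; positivity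
  set K : Set (Fin k → EuclideanSpace ℝ (Fin p)) := {Θ | ∀ j, Θ j ∈ cube p M} with hKdef
  have hKmem : ∀ Θ : Fin k → EuclideanSpace ℝ (Fin p),
      Θ ∈ K ↔ ∀ j, Θ j ∈ cube p M := fun Θ => by rw [hKdef]; exact Iff.rfl
  set R : (Fin k → EuclideanSpace ℝ (Fin p)) → ℝ :=
    fun Θ => ∫ x, fTheta φ Ψ Θ x ∂P with hRdef
  set S : ℕ → Ω → (Fin k → EuclideanSpace ℝ (Fin p)) → ℝ :=
    fun n ω Θ => (n : ℝ)⁻¹ * ∑ i ∈ Finset.range n, fTheta φ Ψ Θ (X i ω) with hSdef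
  have hKcomp : IsCompact K := by
    have hKeq : K = Set.pi Set.univ fun _ : Fin k => cube p M := by
      ext Θ; rw [hKdef]; simp [Set.mem_pi]
    rw [hKeq]
    exact isCompact_univ_pi fun _ => cube_isCompact hM0
  have hfnonneg : ∀ (Θ : Fin k → EuclideanSpace ℝ (Fin p)) x, 0 ≤ fTheta φ Ψ Θ x := fun Θ x =>
    hΨnonneg _ fun j => dphi_nonneg φ hφconv hφdiff _ _
  have hfcont : ∀ Θ : Fin k → EuclideanSpace ℝ (Fin p), Continuous (fTheta φ Ψ Θ) :=
    fun Θ => fTheta_cont φ Ψ hφconv hφdiff hΨlip Θ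
  have hfle : ∀ Θ ∈ K, ∀ x ∈ cube p M, fTheta φ Ψ Θ x ≤ Bf := by
    intro Θ hΘ x hx
    have hΘ' := (hKmem Θ).1 hΘ
    have h1 := hΨlip (fun j => dphi φ x (Θ j)) 0
      (fun j => dphi_nonneg φ hφconv hφdiff _ _) (fun j => le_rfl)
    rw [hΨzero, sub_zero] at h1
    have h3 : ∑ j, |dphi φ x (Θ j) - (0 : Fin k → ℝ) j| ≤ (k:ℝ) * Bd := by
      calc ∑ j, |dphi φ x (Θ j) - (0 : Fin k → ℝ) j| ≤ ∑ _j : Fin k, Bd := by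
            apply Finset.sum_le_sum
            intro j _
            rw [Pi.zero_apply, sub_zero, abs_of_nonneg (dphi_nonneg φ hφconv hφdiff _ _)]
            rw [hBdef]
            exact dphi_le_bound φ hφconv hφdiff hM0 hH hgradlip hx (hΘ' j)
        _ = (k:ℝ) * Bd := by simp [mul_comm]
    calc fTheta φ Ψ Θ x ≤ |Ψ (fun j => dphi φ x (Θ j))| := le_abs_self _
      _ ≤ τ * ∑ j, |dphi φ x (Θ j) - (0 : Fin k → ℝ) j| := h1
      _ ≤ τ * ((k:ℝ) * Bd) := mul_le_mul_of_nonneg_left h3 hτ.le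
      _ = Bf := by rw [hBfdef]
  have hflip : ∀ Θ ∈ K, ∀ Θ' ∈ K, ∀ x ∈ cube p M,
      |fTheta φ Ψ Θ x - fTheta φ Ψ Θ' x| ≤ L * dist Θ Θ' := by
    intro Θ hΘ Θ' hΘ' x hx
    have hΘ1 := (hKmem Θ).1 hΘ
    have hΘ2 := (hKmem Θ').1 hΘ'
    have h1 := fTheta_diff_le φ Ψ hφconv hφdiff hΨlip Θ Θ' x x
    have h2 : ∀ j, |dphi φ x (Θ j) - dphi φ x (Θ' j)| ≤ C * dist Θ Θ' := by
      intro j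
      have h := dphi_lip_right φ hφconv hφdiff hM0 hH hgradlip hx (hΘ1 j) (hΘ2 j)
      rw [← hCdef] at h
      refine h.trans ?_
      have hd : ‖Θ j - Θ' j‖ ≤ dist Θ Θ' := by
        rw [← dist_eq_norm]; exact dist_le_pi_dist Θ Θ' j
      exact mul_le_mul_of_nonneg_left hd hC
    calc |fTheta φ Ψ Θ x - fTheta φ Ψ Θ' x|
        ≤ τ * ∑ j, |dphi φ x (Θ j) - dphi φ x (Θ' j)| := h1
      _ ≤ τ * ∑ _j : Fin k, C * dist Θ Θ' :=
          mul_le_mul_of_nonneg_left (Finset.sum_le_sum fun j _ => h2 j) hτ.le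
      _ = L * dist Θ Θ' := by rw [hLdef]; simp [Finset.sum_const, Finset.card_univ]; ring
  have hPae : ∀ᵐ x ∂P, x ∈ cube p M := by
    rw [ae_iff]
    have h0 : {x : EuclideanSpace ℝ (Fin p) | ¬ x ∈ cube p M} = (cube p M)ᶜ := rfl
    rw [h0, measure_compl cube_isClosed.measurableSet (measure_ne_top P _), hP, measure_univ]
    simp
  have hint : ∀ Θ ∈ K, Integrable (fTheta φ Ψ Θ) P := by
    intro Θ hΘ
    refine Integrable.mono' (integrable_const Bf) (hfcont Θ).aestronglyMeasurable ?_
    filter_upwards [hPae] with x hx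
    rw [Real.norm_eq_abs, abs_of_nonneg (hfnonneg Θ x)]
    exact hfle Θ hΘ x hx
  have hRlip : ∀ Θ ∈ K, ∀ Θ' ∈ K, |R Θ - R Θ'| ≤ L * dist Θ Θ' := by
    intro Θ hΘ Θ' hΘ'
    have heq : R Θ - R Θ' = ∫ x, (fTheta φ Ψ Θ x - fTheta φ Ψ Θ' x) ∂P := by
      rw [hRdef]; simp only
      rw [integral_sub (hint Θ hΘ) (hint Θ' hΘ')]
    rw [heq, ← Real.norm_eq_abs]
    have h := norm_integral_le_of_norm_le_const (μ := P)
      (f := fun x => fTheta φ Ψ Θ x - fTheta φ Ψ Θ' x) (C := L * dist Θ Θ')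
      (by filter_upwards [hPae] with x hx
          rw [Real.norm_eq_abs]
          exact hflip Θ hΘ Θ' hΘ' x hx)
    simpa [measure_univ] using h
  have hXcube : ∀ᵐ ω ∂(ℙ : Measure Ω), ∀ i, X i ω ∈ cube p M := by
    rw [ae_all_iff]
    intro i
    rw [ae_iff]
    have h1 : {ω | ¬ X i ω ∈ cube p M} = X i ⁻¹' (cube p M)ᶜ := rfl
    rw [h1, ← Measure.map_apply (hXmeas i) cube_isClosed.measurableSet.compl, hXlaw i,
      measure_compl cube_isClosed.measurableSet (measure_ne_top P _), hP, measure_univ]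
    simp
  have hSLLN : ∀ Θ ∈ K, ∀ᵐ ω ∂(ℙ : Measure Ω),
      Tendsto (fun n => S n ω Θ) atTop (𝓝 (R Θ)) := by
    intro Θ hΘ
    have hmeas : Measurable (fTheta φ Ψ Θ) := (hfcont Θ).measurable
    have hint0 : Integrable (fun ω => fTheta φ Ψ Θ (X 0 ω)) (ℙ : Measure Ω) := by
      have h1 : Integrable (fTheta φ Ψ Θ) (Measure.map (X 0) ℙ) := by
        rw [hXlaw 0]; exact hint Θ hΘ
      exact (integrable_map_measure (hfcont Θ).aestronglyMeasurable
        (hXmeas 0).aemeasurable).1 h1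
    have hindep : Pairwise (Function.onFun (IndepFun · · (ℙ : Measure Ω))
        fun i ω => fTheta φ Ψ Θ (X i ω)) := by
      intro i j hij
      exact (hXindep.indepFun hij).comp hmeas hmeas
    have hident' : ∀ i, IdentDistrib (fun ω => fTheta φ Ψ Θ (X i ω))
        (fun ω => fTheta φ Ψ Θ (X 0 ω)) (ℙ : Measure Ω) (ℙ : Measure Ω) := by
      intro i
      have hbase : IdentDistrib (X i) (X 0) (ℙ : Measure Ω) (ℙ : Measure Ω) :=
        ⟨(hXmeas i).aemeasurable, (hXmeas 0).aemeasurable, by rw [hXlaw i, hXlaw 0]⟩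
      exact hbase.comp hmeas
    have hmean : ∫ ω, fTheta φ Ψ Θ (X 0 ω) ∂(ℙ : Measure Ω) = R Θ := by
      rw [hRdef]; simp only
      rw [← hXlaw 0, integral_map (hXmeas 0).aemeasurable (hfcont Θ).aestronglyMeasurable]
    have h := strong_law_ae_real _ hint0 hindep hident'
    filter_upwards [h] with ω hω
    have h2 : (fun n : ℕ => (∑ i ∈ Finset.range n, fTheta φ Ψ Θ (X i ω)) / n)
        = fun n => S n ω Θ := by
      funext n; rw [hSdef]; simp only; rw [div_eq_inv_mul]
    rw [← h2, ← hmean]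
    exact hω
  have huni : ∀ m : ℕ, ∀ᵐ ω ∂(ℙ : Measure Ω), ∀ᶠ n in atTop, ∀ Θ ∈ K,
      |S n ω Θ - R Θ| ≤ 1 / ((m:ℝ) + 1) := by
    intro m
    set δ : ℝ := 1 / ((m:ℝ) + 1) with hδdef
    have hδ : 0 < δ := by rw [hδdef]; positivity
    set r : ℝ := δ / (3 * (L + 1)) with hrdef
    have hr : 0 < r := by rw [hrdef]; positivity
    have hLr : L * r ≤ δ / 3 := by
      rw [hrdef]
      have h3 : (0:ℝ) < 3 * (L + 1) := by linarith
      rw [← mul_div_assoc, div_le_div_iff₀ h3 (by norm_num : (0:ℝ) < 3)]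
      nlinarith [hδ.le, hL]
    obtain ⟨T, hTK, hTfin, hTcov⟩ := hKcomp.finite_cover_balls hr
    have hae : ∀ᵐ ω ∂(ℙ : Measure Ω), ∀ t ∈ T,
        Tendsto (fun n => S n ω t) atTop (𝓝 (R t)) :=
      (ae_ball_iff hTfin.countable).2 fun t ht => hSLLN t (hTK ht)
    filter_upwards [hae, hXcube] with ω hω hXc
    have hev : ∀ᶠ n in atTop, ∀ t ∈ T, |S n ω t - R t| ≤ δ / 3 := by
      rw [eventually_all_finite hTfin]
      intro t ht
      obtain ⟨N, hN⟩ := Metric.tendsto_atTop.1 (hω t ht) (δ / 3) (by positivity)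
      rw [eventually_atTop]
      refine ⟨N, fun n hn => ?_⟩
      have h2 := hN n hn
      rw [Real.dist_eq] at h2
      exact h2.le
    filter_upwards [hev] with n hn
    intro Θ hΘ
    obtain ⟨t, ht, hmem⟩ : ∃ t ∈ T, Θ ∈ Metric.ball t r := by
      have := hTcov hΘ
      simpa [Set.mem_iUnion] using this
    rw [Metric.mem_ball] at hmem
    have hdist : dist Θ t ≤ r := hmem.le
    have h1 : |S n ω Θ - S n ω t| ≤ L * r := by
      have heq : S n ω Θ - S n ω t
          = (n:ℝ)⁻¹ * ∑ i ∈ Finset.range n,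
              (fTheta φ Ψ Θ (X i ω) - fTheta φ Ψ t (X i ω)) := by
        rw [hSdef]; simp only
        rw [Finset.sum_sub_distrib, mul_sub]
      rw [heq]
      apply inv_mul_abs_sum_le (by positivity)
      intro i _
      calc |fTheta φ Ψ Θ (X i ω) - fTheta φ Ψ t (X i ω)| ≤ L * dist Θ t :=
            hflip Θ hΘ t (hTK ht) (X i ω) (hXc i)
        _ ≤ L * r := mul_le_mul_of_nonneg_left hdist hL
    have h2 : |R Θ - R t| ≤ L * r :=
      (hRlip Θ hΘ t (hTK ht)).trans (mul_le_mul_of_nonneg_left hdist hL)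
    have h3 := hn t ht
    have h4 : |S n ω Θ - R Θ| ≤ |S n ω Θ - S n ω t| + |S n ω t - R t| + |R t - R Θ| := by
      have ha := abs_sub_le (S n ω Θ) (S n ω t) (R Θ)
      have hb := abs_sub_le (S n ω t) (R t) (R Θ)
      linarith
    have h2' : |R t - R Θ| ≤ L * r := by rw [abs_sub_comm]; exact h2
    calc |S n ω Θ - R Θ| ≤ |S n ω Θ - S n ω t| + |S n ω t - R t| + |R t - R Θ| := h4
      _ ≤ L * r + δ / 3 + L * r := by linarith
      _ ≤ δ / 3 + δ / 3 + δ / 3 := by linarith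
      _ = δ := by ring
  have huniAll : ∀ᵐ ω ∂(ℙ : Measure Ω), ∀ m : ℕ, ∀ᶠ n in atTop, ∀ Θ ∈ K,
      |S n ω Θ - R Θ| ≤ 1 / ((m:ℝ) + 1) := ae_all_iff.2 huni
  have hRstar_le : ∀ Θ : Fin k → EuclideanSpace ℝ (Fin p), R Θstar ≤ R Θ := by
    intro Θ
    rw [hRdef]; simp only
    exact hΘstar Θ
  have hstarK : Θstar ∈ K := (hKmem Θstar).2 hΘstarC
  filter_upwards [huniAll, hΘhat] with ω hU hmin
  have hhatK : ∀ n : ℕ, 0 < n → Θhat n ω ∈ K := fun n hn => (hKmem _).2 (hmin n hn).1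
  have hRhat : Tendsto (fun n => R (Θhat n ω)) atTop (𝓝 (R Θstar)) := by
    rw [Metric.tendsto_atTop]
    intro ε hε
    obtain ⟨m, hm⟩ := exists_nat_one_div_lt (show (0:ℝ) < ε / 3 by positivity)
    obtain ⟨N, hN⟩ := Filter.eventually_atTop.1 ((hU m).and (eventually_ge_atTop 1))
    refine ⟨N, fun n hn => ?_⟩
    obtain ⟨hEn, hn1⟩ := hN n hn
    have hpos : 0 < n := hn1
    have hK' : Θhat n ω ∈ K := hhatK n hpos
    have ha := hEn (Θhat n ω) hK'
    have hb := hEn Θstar hstarK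
    have hc : S n ω (Θhat n ω) ≤ S n ω Θstar := by
      rw [hSdef]; simp only
      exact (hmin n hpos).2 Θstar hΘstarC
    have hd := hRstar_le (Θhat n ω)
    rw [Real.dist_eq, abs_of_nonneg (sub_nonneg.2 hd)]
    have ha' := abs_le.1 ha
    have hb' := abs_le.1 hb
    linarith [ha'.1, ha'.2, hb'.1, hb'.2, hm]
  have hdiss : Tendsto (fun n => diss (Θhat n ω) Θstar) atTop (𝓝 0) := by
    rw [Metric.tendsto_atTop]
    intro ε hε
    obtain ⟨ε', hε', hid⟩ := hident (ε / 2) (by positivity)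
    obtain ⟨N1, hN1⟩ := Metric.tendsto_atTop.1 hRhat ε' hε'
    refine ⟨max N1 1, fun n hn => ?_⟩
    have hn1 : 1 ≤ n := le_trans (le_max_right _ _) hn
    have hpos : 0 < n := hn1
    have hd1 := hN1 n (le_trans (le_max_left _ _) hn)
    rw [Real.dist_eq] at hd1
    have hK' : ∀ j, Θhat n ω j ∈ cube p M := (hmin n hpos).1
    have hle : diss (Θhat n ω) Θstar ≤ ε / 2 := by
      by_contra hlt
      push_neg at hlt
      have hgt := hid (Θhat n ω) hK' hlt
      have h2 : R Θstar + ε' < R (Θhat n ω) := by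
        rw [hRdef]; simp only
        exact hgt
      have h3 := abs_lt.1 hd1
      linarith [h3.1, h3.2]
    rw [Real.dist_eq, sub_zero, abs_of_nonneg (diss_nonneg _ _)]
    linarith
  constructor
  · have he1 : (fun n => ∫ x, fTheta φ Ψ (Θhat n ω) x ∂P) = fun n => R (Θhat n ω) := by
      funext n; rw [hRdef]
    have he2 : ∫ x, fTheta φ Ψ Θstar x ∂P = R Θstar := by rw [hRdef]
    rw [he1, he2]
    exact hRhat
  · exact hdiss
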